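/- Let σ be a positional strategy for player T in the justification game graph G_JF, I an interpretation, and x a defined fact. Then val(J_σ(x), x, I) equals the greatest lower bound, over all general strategies τ for F, of u(x, σ, τ), where u(x, σ, τ) = I(B(b_{play(x,σ,τ)})) is the evaluated value of the branch corresponding to the unique play from x consistent with σ and τ. -/

import Mathlib

namespace JT

open scoped Classical

/-- Three truth values: 0 = 𝐟, 1 = 𝐮, 2 = 𝐭, with the truth order. -/
abbrev TV := Fin 3

/-- Complement on truth values: swaps 𝐭 and 𝐟, fixes 𝐮. -/
def TV.neg (v : TV) : TV := 2 - v

/-- A justification frame over a fact space `F`. -/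
structure JFrame (F : Type) where
  compl : F → F
  compl_invol : ∀ x, compl (compl x) = x
  tLit : F
  fLit : F
  uLit : F
  compl_t : compl tLit = fLit
  compl_u : compl uLit = uLit
  lit_distinct : tLit ≠ fLit ∧ tLit ≠ uLit ∧ fLit ≠ uLit
  defined : Set F
  defined_compl : ∀ x ∈ defined, compl x ∈ defined
  t_not_def : tLit ∉ defined
  f_not_def : fLit ∉ defined
  u_not_def : uLit ∉ defined
  rules : Set (F × Set F)
  rules_head : ∀ r ∈ rules, r.1 ∈ defined
  rules_body_ne : ∀ r ∈ rules, r.2.Nonempty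
  rules_ex : ∀ x ∈ defined, ∃ A : Set F, (x, A) ∈ rules

variable {F : Type}

def JFrame.openF (JF : JFrame F) : Set F := JF.definedᶜ

/-- A (three-valued) interpretation of the fact space. -/
structure Interp (JF : JFrame F) where
  val : F → TV
  val_compl : ∀ x, val (JF.compl x) = TV.neg (val x)
  val_t : val JF.tLit = 2
  val_f : val JF.fLit = 0
  val_u : val JF.uLit = 1

/-- Branches: finite (the whole finite sequence, as a list) or infinite. -/
inductive Branch (F : Type) where
  | fin : List F → Branch F
  | inf : (ℕ → F) → Branch F

def Branch.startsAt : Branch F → F → Prop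
  | .fin l, x => l.head? = some x
  | .inf s, x => s 0 = x

/-- `b` is a `JF`-branch: an infinite sequence in `F_d`, or a finite nonempty
sequence in `F_d` followed by an open fact. -/
def JFrame.IsBranch (JF : JFrame F) : Branch F → Prop
  | .fin l => 2 ≤ l.length ∧ (∀ a ∈ l.dropLast, a ∈ JF.defined) ∧
      (∀ e, l.getLast? = some e → e ∉ JF.defined)
  | .inf s => ∀ n, s n ∈ JF.defined

/-- Prepend a finite path `p` to a branch. -/
def Branch.prepend (p : List F) : Branch F → Branch F
  | .fin l => .fin (p ++ l)
  | .inf s => .inf (fun n => if h : n < p.length then p.get ⟨n, h⟩ else s (n - p.length))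

/-- Elementwise complement of a branch. -/
def Branch.compl (JF : JFrame F) : Branch F → Branch F
  | .fin l => .fin (l.map JF.compl)
  | .inf s => .inf (fun n => JF.compl (s n))

/-- A branch evaluation is consistent if `B(~b) = ~B(b)`. -/
def JFrame.ConsistentBE (JF : JFrame F) (B : Branch F → F) : Prop :=
  ∀ b : Branch F, JF.IsBranch b → B (Branch.compl JF b) = JF.compl (B b)

/-- A graph-like justification (labels are injective, so nodes are facts). -/
structure GraphJust (JF : JFrame F) where
  nodes : Set F
  edges : Set (F × F)
  edges_mem : ∀ e ∈ edges, e.1 ∈ nodes ∧ e.2 ∈ nodes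
  rule_of_internal : ∀ x ∈ nodes, (∃ y, (x, y) ∈ edges) →
      (x, {y | (x, y) ∈ edges}) ∈ JF.rules

namespace GraphJust
variable {JF : JFrame F}

def LocallyComplete (J : GraphJust JF) : Prop :=
  ∀ x ∈ J.nodes, x ∈ JF.defined → ∃ y, (x, y) ∈ J.edges

def Connected (J : GraphJust JF) : Prop :=
  ∀ x ∈ J.nodes, ∀ y ∈ J.nodes,
    Relation.ReflTransGen (fun a b => (a, b) ∈ J.edges ∨ (b, a) ∈ J.edges) x y

def IsRoot (J : GraphJust JF) (x : F) : Prop :=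
  x ∈ J.nodes ∧ ∀ y ∈ J.nodes, Relation.ReflTransGen (fun a b => (a, b) ∈ J.edges) x y

/-- `J`-branches starting in `x`: maximal paths in `J` from `x`. -/
def IsBranchFrom (J : GraphJust JF) (x : F) : Branch F → Prop
  | .fin l => l.head? = some x ∧ (∀ a ∈ l, a ∈ J.nodes) ∧
      List.Chain' (fun a b => (a, b) ∈ J.edges) l ∧
      (∀ e, l.getLast? = some e → ∀ y, (e, y) ∉ J.edges)
  | .inf s => s 0 = x ∧ (∀ n, s n ∈ J.nodes) ∧ (∀ n, (s n, s (n+1)) ∈ J.edges)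

/-- The value of `x` by `J` under `I`. -/
noncomputable def val (J : GraphJust JF) (B : Branch F → F) (x : F) (I : Interp JF) : TV :=
  ⨅ b ∈ {b | J.IsBranchFrom x b}, I.val (B b)

end GraphJust

/-- Underlying undirected simple graph of a directed relation. -/
def symGraph {α : Type} (e : α → α → Prop) : SimpleGraph α where
  Adj a b := a ≠ b ∧ (e a b ∨ e b a)
  symm := ⟨fun _ _ h => ⟨Ne.symm h.1, h.2.symm⟩⟩
  loopless := ⟨fun _ h => h.1 rfl⟩

/-- A tree-like justification: a directed labelled graph whose underlying
undirected graph is a forest. -/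
structure TreeJust (JF : JFrame F) where
  Node : Type
  edge : Node → Node → Prop
  label : Node → F
  rule_of_internal : ∀ n, (∃ m, edge n m) →
      (label n, {y | ∃ m, edge n m ∧ label m = y}) ∈ JF.rules
  forest : (symGraph edge).IsAcyclic

namespace TreeJust
variable {JF : JFrame F}

def LocallyComplete (T : TreeJust JF) : Prop :=
  ∀ n, T.label n ∈ JF.defined → ∃ m, T.edge n m

def Connected (T : TreeJust JF) : Prop :=
  ∀ a b : T.Node, Relation.ReflTransGen (fun u v => T.edge u v ∨ T.edge v u) a b

def IsRoot (T : TreeJust JF) (x : F) : Prop :=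
  ∃ n, T.label n = x ∧ ∀ m, Relation.ReflTransGen T.edge n m

def IsBranchFrom (T : TreeJust JF) (x : F) : Branch F → Prop
  | .fin l => ∃ ns : List T.Node, List.Chain' T.edge ns ∧ ns.map T.label = l ∧
      l.head? = some x ∧ (∀ nl, ns.getLast? = some nl → ∀ m, ¬ T.edge nl m)
  | .inf s => ∃ ns : ℕ → T.Node, (∀ n, T.edge (ns n) (ns (n+1))) ∧
      (∀ n, T.label (ns n) = s n) ∧ s 0 = x

noncomputable def val (T : TreeJust JF) (B : Branch F → F) (x : F) (I : Interp JF) : TV :=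
  ⨅ b ∈ {b | T.IsBranchFrom x b}, I.val (B b)

end TreeJust

/-- Graph-like supported value. -/
noncomputable def SVg (JF : JFrame F) (B : Branch F → F) (x : F) (I : Interp JF) : TV :=
  if x ∈ JF.defined then
    ⨆ J ∈ {J : GraphJust JF | J.LocallyComplete ∧ x ∈ J.nodes}, J.val B x I
  else I.val x

/-- Tree-like supported value. -/
noncomputable def SVt (JF : JFrame F) (B : Branch F → F) (x : F) (I : Interp JF) : TV :=
  if x ∈ JF.defined then
    ⨆ (T : TreeJust JF) (_ : T.LocallyComplete ∧ ∃ n, T.label n = x), T.val B x I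
  else I.val x

/-! ### Games -/

/-- A game graph: states owned by player 𝐓 (`T`) or by player 𝐅 (`Tᶜ`), edges `E`. -/
structure GameGraph (S : Type) where
  T : Set S
  E : Set (S × S)

namespace GameGraph
variable {S : Type}

def IsPath (G : GameGraph S) (p : List S) : Prop :=
  p ≠ [] ∧ List.Chain' (fun a b => (a, b) ∈ G.E) p

end GameGraph

/-- A general strategy for the player owning the states in `P`. -/
structure GenStrat {S : Type} (G : GameGraph S) (P : Set S) where
  next : List S → S
  next_ok : ∀ p s, G.IsPath p → p.getLast? = some s → s ∈ P →
      (∃ t2, (s, t2) ∈ G.E) → (s, next p) ∈ G.E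

/-- A positional strategy for the player owning the states in `P`. -/
structure PosStrat {S : Type} (G : GameGraph S) (P : Set S) where
  move : S → S
  move_ok : ∀ s ∈ P, (∃ t2, (s, t2) ∈ G.E) → (s, move s) ∈ G.E

/-- The embedding of positional strategies into general strategies. -/
noncomputable def PosStrat.toGen {S : Type} [Nonempty S] {G : GameGraph S} {P : Set S}
    (σ : PosStrat G P) : GenStrat G P where
  next p := σ.move (p.getLastD (Classical.arbitrary S))
  next_ok := by
    intro p s _ hlast hsP hout
    have h : p.getLastD (Classical.arbitrary S) = s := by
      rw [List.getLastD_eq_getLast?, hlast]; rfl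
    show (s, σ.move (p.getLastD (Classical.arbitrary S))) ∈ G.E
    rw [h]; exact σ.move_ok s hsP hout

/-- The finite prefixes of the unique play from `x` consistent with both strategies. -/
noncomputable def GameGraph.playPrefix {S : Type} (G : GameGraph S)
    (σ : GenStrat G G.T) (τ : GenStrat G G.Tᶜ) (x : S) : ℕ → List S
  | 0 => [x]
  | n + 1 =>
    let p := G.playPrefix σ τ x n
    match p.getLast? with
    | none => p
    | some s =>
      if (∃ t2, (s, t2) ∈ G.E) then
        p ++ [if s ∈ G.T then σ.next p else τ.next p]
      else p

/-- The trace of the play from `x`: the state at each time step, if any. -/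
noncomputable def GameGraph.playTrace {S : Type} (G : GameGraph S)
    (σ : GenStrat G G.T) (τ : GenStrat G G.Tᶜ) (x : S) : ℕ → Option S :=
  fun n => (G.playPrefix σ τ x n)[n]?

/-- Value of the play from `x`, for a valuation `v` of plays (given by traces). -/
noncomputable def GameGraph.uval {S V : Type} [CompleteLinearOrder V] (G : GameGraph S)
    (v : (ℕ → Option S) → V) (x : S) (σ : GenStrat G G.T) (τ : GenStrat G G.Tᶜ) : V :=
  v (G.playTrace σ τ x)

/-- Optimal pair of strategies. -/
def GameGraph.OptimalPair {S V : Type} [CompleteLinearOrder V] (G : GameGraph S)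
    (v : (ℕ → Option S) → V) (σs : GenStrat G G.T) (τs : GenStrat G G.Tᶜ) : Prop :=
  ∀ s : S, (∀ σ, G.uval v s σ τs ≤ G.uval v s σs τs) ∧
    (∀ τ, G.uval v s σs τs ≤ G.uval v s σs τ)

/-! ### The justification game -/

/-- Rule symbols `r_{x ← A}`. -/
def RuleSym (JF : JFrame F) : Type := {r : F × Set F // r ∈ JF.rules}

/-- States of the justification game: facts (owned by 𝐓) and rule symbols (owned by 𝐅). -/
abbrev GState (JF : JFrame F) : Type := F ⊕ RuleSym JF

instance (JF : JFrame F) : Nonempty (GState JF) := ⟨Sum.inl JF.tLit⟩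

/-- The game graph `G_JF` associated to a justification frame. -/
def JFrame.game (JF : JFrame F) : GameGraph (GState JF) where
  T := Set.range Sum.inl
  E := {e | (∃ (x : F) (r : RuleSym JF), e = (Sum.inl x, Sum.inr r) ∧ r.1.1 = x) ∨
            (∃ (r : RuleSym JF) (y : F), e = (Sum.inr r, Sum.inl y) ∧ y ∈ r.1.2)}

/-- The `JF`-branch obtained from the play from `s` by filtering out rule symbols. -/
noncomputable def JFrame.playBranch (JF : JFrame F)
    (σ : GenStrat JF.game JF.game.T) (τ : GenStrat JF.game JF.game.Tᶜ)
    (s : GState JF) : Branch F :=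
  if h : ∃ n, JF.game.playPrefix σ τ s (n+1) = JF.game.playPrefix σ τ s n then
    .fin ((JF.game.playPrefix σ τ s (Nat.find h)).filterMap Sum.getLeft?)
  else
    .inf (fun k => ((JF.game.playPrefix σ τ s (2*k+2)).filterMap Sum.getLeft?).getD k JF.tLit)

/-- `u(s, σ, τ) = I(B(b_{play(s,σ,τ)}))`. -/
noncomputable def JFrame.uS (JF : JFrame F) (B : Branch F → F) (I : Interp JF)
    (s : GState JF) (σ : GenStrat JF.game JF.game.T) (τ : GenStrat JF.game JF.game.Tᶜ) : TV :=
  I.val (B (JF.playBranch σ τ s))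

/-- Optimal pair of strategies in the justification game `G_{JS,I}`. -/
def JFrame.OptPair (JF : JFrame F) (B : Branch F → F) (I : Interp JF)
    (σs : GenStrat JF.game JF.game.T) (τs : GenStrat JF.game JF.game.Tᶜ) : Prop :=
  ∀ s : GState JF, (∀ σ, JF.uS B I s σ τs ≤ JF.uS B I s σs τs) ∧
    (∀ τ, JF.uS B I s σs τs ≤ JF.uS B I s σs τ)

/-! ### Play graphs of positional strategies, filtered -/

/-- Steps consistent with a positional strategy for 𝐓. -/
def JFrame.stepT (JF : JFrame F) (σ : PosStrat JF.game JF.game.T)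
    (a b : GState JF) : Prop :=
  (a, b) ∈ JF.game.E ∧ (a ∈ JF.game.T → b = σ.move a)

def JFrame.reachT (JF : JFrame F) (σ : PosStrat JF.game JF.game.T) (x : F) :
    Set (GState JF) :=
  {s | Relation.ReflTransGen (JF.stepT σ) (Sum.inl x) s}

/-- Nodes of the play graph of `σ` at `x` with rule symbols filtered out. -/
def JFrame.filtNodesT (JF : JFrame F) (σ : PosStrat JF.game JF.game.T) (x : F) : Set F :=
  {y | Sum.inl y ∈ JF.reachT σ x}

/-- Edges of the play graph of `σ` at `x` with rule symbols filtered out. -/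
def JFrame.filtEdgesT (JF : JFrame F) (σ : PosStrat JF.game JF.game.T) (x : F) :
    Set (F × F) :=
  {e | ∃ r : RuleSym JF, Sum.inl e.1 ∈ JF.reachT σ x ∧
      JF.stepT σ (Sum.inl e.1) (Sum.inr r) ∧ JF.stepT σ (Sum.inr r) (Sum.inl e.2)}

/-- Steps consistent with a positional strategy for 𝐅. -/
def JFrame.stepF (JF : JFrame F) (τ : PosStrat JF.game JF.game.Tᶜ)
    (a b : GState JF) : Prop :=
  (a, b) ∈ JF.game.E ∧ (a ∈ JF.game.Tᶜ → b = τ.move a)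

def JFrame.reachF (JF : JFrame F) (τ : PosStrat JF.game JF.game.Tᶜ) (x : F) :
    Set (GState JF) :=
  {s | Relation.ReflTransGen (JF.stepF τ) (Sum.inl x) s}

/-- Nodes of the play graph of `τ` at `x`, rule symbols filtered out, labels negated. -/
def JFrame.filtNodesF (JF : JFrame F) (τ : PosStrat JF.game JF.game.Tᶜ) (x : F) : Set F :=
  {w | ∃ y : F, w = JF.compl y ∧ Sum.inl y ∈ JF.reachF τ x}

/-- Edges of the play graph of `τ` at `x`, rule symbols filtered out, labels negated. -/
def JFrame.filtEdgesF (JF : JFrame F) (τ : PosStrat JF.game JF.game.Tᶜ) (x : F) :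
    Set (F × F) :=
  {e | ∃ (y z : F) (r : RuleSym JF), e = (JF.compl y, JF.compl z) ∧
      Sum.inl y ∈ JF.reachF τ x ∧
      JF.stepF τ (Sum.inl y) (Sum.inr r) ∧ JF.stepF τ (Sum.inr r) (Sum.inl z)}

/-! ### Complementation -/

/-- A selection function for `x` chooses an element from the body of each rule of `x`. -/
def JFrame.SelectionFn (JF : JFrame F) (x : F) : Type :=
  {s : {A : Set F // (x, A) ∈ JF.rules} → F // ∀ A, s A ∈ A.1}

/-- `JF` is complementary: fixed under complementation, i.e. for each defined `x` and
selection function `s` for `x`, the rule `~x ← ~Im(s)` belongs to the rules. -/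
def JFrame.Complementary (JF : JFrame F) : Prop :=
  ∀ x ∈ JF.defined, ∀ s : JF.SelectionFn x,
    (JF.compl x, JF.compl '' Set.range s.1) ∈ JF.rules

/-! ### Monotone, selective, transitive branch evaluations -/

/-- Monotone branch evaluation. -/
def JFrame.MonotoneBE (JF : JFrame F) (B : Branch F → F) : Prop :=
  ∀ (I : Interp JF) (x : F), x ∈ JF.defined →
    ∀ b1 b2 : Branch F, JF.IsBranch b1 → JF.IsBranch b2 →
      b1.startsAt x → b2.startsAt x →
      ∀ p : List F, (∀ a ∈ p, a ∈ JF.defined) →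
        I.val (B b1) ≤ I.val (B b2) →
        I.val (B (Branch.prepend p b1)) ≤ I.val (B (Branch.prepend p b2))

/-- Transitive branch evaluation: dropping the first element of a branch with at
least three elements does not change its value. -/
def JFrame.TransitiveBE (JF : JFrame F) (B : Branch F → F) : Prop :=
  ∀ (x0 : F) (b : Branch F), JF.IsBranch b → B (Branch.prepend [x0] b) = B b

/-- A finite loop starting in `x`. -/
def JFrame.IsLoopAt (JF : JFrame F) (x : F) (q : List F) : Prop :=
  q.head? = some x ∧ ∀ a ∈ q, a ∈ JF.defined

/-- Finite iterations of loops from `L`. -/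
def FinIter (L : Set (List F)) : Set (List F) :=
  {w | ∃ ls : List (List F), (∀ l ∈ ls, l ∈ L) ∧ w = ls.flatten}

/-- `s` is the concatenation of the infinite sequence of lists `f`. -/
def IsConcat (f : ℕ → List F) (s : ℕ → F) : Prop :=
  ∃ c : ℕ → ℕ, c 0 = 0 ∧ (∀ i, c (i+1) = c i + (f i).length) ∧
    ∀ i k (h : k < (f i).length), s (c i + k) = (f i).get ⟨k, h⟩

/-- `L^ω`: infinite iterations of loops from `L`, as branches. -/
def InfIter (L : Set (List F)) : Set (Branch F) :=
  {b | ∃ (f : ℕ → List F) (s : ℕ → F), (∀ i, f i ∈ L) ∧ (∀ i, f i ≠ []) ∧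
      IsConcat f s ∧ b = .inf s}

/-- `p L* K`. -/
def StarKSet (p : List F) (L : Set (List F)) (K : Set (Branch F)) : Set (Branch F) :=
  {b | ∃ w ∈ FinIter L, ∃ k ∈ K, b = Branch.prepend (p ++ w) k}

/-- `p L^ω`. -/
def OmegaSet (p : List F) (L : Set (List F)) : Set (Branch F) :=
  {b | ∃ b0 ∈ InfIter L, b = Branch.prepend p b0}

/-- `p K`. -/
def PrepSet (p : List F) (K : Set (Branch F)) : Set (Branch F) :=
  (Branch.prepend p) '' K

/-- Selective branch evaluation with respect to `I`. -/
def JFrame.SelectiveBE (JF : JFrame F) (B : Branch F → F) (I : Interp JF) : Prop :=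
  ∀ p : List F, (∀ a ∈ p, a ∈ JF.defined) →
  ∀ x ∈ JF.defined,
  ∀ M N : Set (List F), (∀ q ∈ M, JF.IsLoopAt x q) → (∀ q ∈ N, JF.IsLoopAt x q) →
  ∀ K : Set (Branch F), (∀ b ∈ K, JF.IsBranch b ∧ b.startsAt x) →
  ∀ b ∈ StarKSet p (M ∪ N) K ∪ OmegaSet p (M ∪ N),
    (∃ bs ∈ OmegaSet p M ∪ OmegaSet p N ∪ PrepSet p K, I.val (B bs) ≤ I.val (B b)) ∧
    (∃ bu ∈ OmegaSet p M ∪ OmegaSet p N ∪ PrepSet p K, I.val (B b) ≤ I.val (B bu))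

/-! ### Concrete branch evaluations -/

/-- Supported (completion) branch evaluation: maps a branch to its second element. -/
def Bsp (JF : JFrame F) : Branch F → F
  | .fin l => l[1]?.getD JF.uLit
  | .inf s => s 1

/-- Kripke-Kleene branch evaluation. -/
def Bkk (JF : JFrame F) : Branch F → F
  | .fin l => l.getLastD JF.uLit
  | .inf _ => JF.uLit

/-- A sign function; `true` means positive, `false` negative. -/
structure SignFn (JF : JFrame F) where
  sgn : F → Bool
  sgn_compl : ∀ x ∈ JF.defined, sgn (JF.compl x) ≠ sgn x

/-- Well-founded branch evaluation. -/
noncomputable def Bwf (JF : JFrame F) (sg : SignFn JF) : Branch F → F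
  | .fin l => l.getLastD JF.uLit
  | .inf s =>
    if ∃ n, ∀ i ≥ n, sg.sgn (s i) = false then JF.tLit
    else if ∃ n, ∀ i ≥ n, sg.sgn (s i) = true then JF.fLit
    else JF.uLit

/-- Stable branch evaluation. -/
noncomputable def Bst (JF : JFrame F) (sg : SignFn JF) : Branch F → F
  | .fin l =>
    match l with
    | [] => JF.uLit
    | x0 :: rest =>
      match rest.find? (fun y => sg.sgn y != sg.sgn x0) with
      | some y => y
      | none => Bwf JF sg (.fin (x0 :: rest))
  | .inf s =>
    if h : ∃ i, sg.sgn (s i) ≠ sg.sgn (s 0) then s (Nat.find h)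
    else Bwf JF sg (.inf s)

end JT

namespace JT

open scoped Classical

/-! ### Auxiliary lemmas for stmt5 -/

section Aux

variable {S : Type}

/-- One step of the play-prefix construction. -/
noncomputable def stepP (G : GameGraph S) (σ : GenStrat G G.T) (τ : GenStrat G G.Tᶜ)
    (p : List S) : List S :=
  match p.getLast? with
  | none => p
  | some s =>
    if (∃ t2, (s, t2) ∈ G.E) then
      p ++ [if s ∈ G.T then σ.next p else τ.next p]
    else p

variable {G : GameGraph S} (σ : GenStrat G G.T) (τ : GenStrat G G.Tᶜ) (x : S)

lemma stepP_eq_none {p : List S} (h : p.getLast? = none) : stepP G σ τ p = p := by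
  unfold stepP; rw [h]

lemma stepP_eq_some {p : List S} {s : S} (h : p.getLast? = some s) :
    stepP G σ τ p =
      if (∃ t2, (s, t2) ∈ G.E) then
        p ++ [if s ∈ G.T then σ.next p else τ.next p]
      else p := by
  unfold stepP; rw [h]

lemma pp_zero : G.playPrefix σ τ x 0 = [x] := rfl

lemma pp_succ (n : ℕ) :
    G.playPrefix σ τ x (n + 1) = stepP G σ τ (G.playPrefix σ τ x n) := by
  rw [GameGraph.playPrefix, stepP]

lemma pp_cases (n : ℕ) : G.playPrefix σ τ x (n + 1) = G.playPrefix σ τ x n ∨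
    ∃ a, G.playPrefix σ τ x (n + 1) = G.playPrefix σ τ x n ++ [a] := by
  rw [pp_succ]
  rcases h : (G.playPrefix σ τ x n).getLast? with _ | s
  · rw [stepP_eq_none σ τ h]; exact Or.inl rfl
  · rw [stepP_eq_some σ τ h]
    by_cases he : ∃ t2, (s, t2) ∈ G.E
    · exact Or.inr ⟨_, by rw [if_pos he]⟩
    · rw [if_neg he]; exact Or.inl rfl

lemma pp_len_le (n : ℕ) : (G.playPrefix σ τ x n).length ≤ n + 1 := by
  induction n with
  | zero => simp [pp_zero]
  | succ n ih =>
    rcases pp_cases σ τ x n with h | ⟨a, h⟩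
    · rw [h]; omega
    · rw [h]; simp; omega

lemma pp_ne_nil (n : ℕ) : G.playPrefix σ τ x n ≠ [] := by
  induction n with
  | zero => simp [pp_zero]
  | succ n ih =>
    rcases pp_cases σ τ x n with h | ⟨a, h⟩
    · rw [h]; exact ih
    · rw [h]; simp

lemma pp_const_after {n : ℕ}
    (h : G.playPrefix σ τ x (n + 1) = G.playPrefix σ τ x n) :
    ∀ m, n ≤ m → G.playPrefix σ τ x m = G.playPrefix σ τ x n := by
  intro m hm
  induction m with
  | zero => cases Nat.le_zero.mp hm; rfl
  | succ m ih =>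
    rcases Nat.lt_or_ge n (m + 1) with hlt | hge
    · have hnm : n ≤ m := by omega
      have := ih hnm
      calc G.playPrefix σ τ x (m + 1) = stepP G σ τ (G.playPrefix σ τ x m) := pp_succ σ τ x m
        _ = stepP G σ τ (G.playPrefix σ τ x n) := by rw [this]
        _ = G.playPrefix σ τ x (n + 1) := (pp_succ σ τ x n).symm
        _ = G.playPrefix σ τ x n := h
    · have hn : n = m + 1 := by omega
      rw [hn]

lemma pp_stab_no_succ {n : ℕ} {s : S}
    (h : G.playPrefix σ τ x (n + 1) = G.playPrefix σ τ x n)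
    (hl : (G.playPrefix σ τ x n).getLast? = some s) : ¬∃ t2, (s, t2) ∈ G.E := by
  intro he
  have : G.playPrefix σ τ x (n + 1) = G.playPrefix σ τ x n ++
      [if s ∈ G.T then σ.next (G.playPrefix σ τ x n) else τ.next (G.playPrefix σ τ x n)] := by
    rw [pp_succ, stepP_eq_some σ τ hl, if_pos he]
  rw [h] at this
  have := congrArg List.length this
  simp at this

end Aux

section AuxJF

variable {F : Type} {JF : JFrame F}

lemma mem_T_inl (y : F) : (Sum.inl y : GState JF) ∈ JF.game.T := ⟨y, rfl⟩

lemma not_mem_T_inr (r : RuleSym JF) : (Sum.inr r : GState JF) ∉ JF.game.T := by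
  rintro ⟨y, h⟩; cases h

lemma E_inl {y : F} {t : GState JF} (h : (Sum.inl y, t) ∈ JF.game.E) :
    ∃ r : RuleSym JF, t = Sum.inr r ∧ r.1.1 = y := by
  rcases h with ⟨x', r, heq, hr⟩ | ⟨r, y', heq, hy⟩
  · obtain ⟨h1, h2⟩ := Prod.mk.injEq .. ▸ heq
    cases h1; exact ⟨r, h2, hr⟩
  · exact absurd (congrArg Prod.fst heq) (by simp)

lemma E_inr {r : RuleSym JF} {t : GState JF} (h : (Sum.inr r, t) ∈ JF.game.E) :
    ∃ z : F, t = Sum.inl z ∧ z ∈ r.1.2 := by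
  rcases h with ⟨x', r', heq, hr⟩ | ⟨r', y', heq, hy⟩
  · exact absurd (congrArg Prod.fst heq) (by simp)
  · obtain ⟨h1, h2⟩ := Prod.mk.injEq .. ▸ heq
    cases Sum.inr.injEq .. ▸ h1; exact ⟨y', h2, hy⟩

lemma E_of_rule {y : F} (r : RuleSym JF) (hr : r.1.1 = y) :
    ((Sum.inl y : GState JF), Sum.inr r) ∈ JF.game.E :=
  Or.inl ⟨y, r, rfl, hr⟩

lemma E_of_body {z : F} (r : RuleSym JF) (hz : z ∈ r.1.2) :
    ((Sum.inr r : GState JF), Sum.inl z) ∈ JF.game.E :=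
  Or.inr ⟨r, z, rfl, hz⟩

lemma inl_has_succ {y : F} (hy : y ∈ JF.defined) :
    ∃ t, ((Sum.inl y : GState JF), t) ∈ JF.game.E := by
  obtain ⟨A, hA⟩ := JF.rules_ex y hy
  exact ⟨Sum.inr ⟨(y, A), hA⟩, E_of_rule _ rfl⟩

lemma defined_of_inl_succ {y : F} {t : GState JF} (h : (Sum.inl y, t) ∈ JF.game.E) :
    y ∈ JF.defined := by
  obtain ⟨r, _, hr⟩ := E_inl h
  exact hr ▸ JF.rules_head r.1 r.2

lemma inr_has_succ (r : RuleSym JF) :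
    ∃ t, ((Sum.inr r : GState JF), t) ∈ JF.game.E := by
  obtain ⟨z, hz⟩ := JF.rules_body_ne r.1 r.2
  exact ⟨Sum.inl z, E_of_body r hz⟩

variable (σp : PosStrat JF.game JF.game.T) (x : F)

lemma move_inl {y : F} (h : ∃ t, ((Sum.inl y : GState JF), t) ∈ JF.game.E) :
    ∃ r : RuleSym JF, σp.move (Sum.inl y) = Sum.inr r ∧
      ((Sum.inl y : GState JF), Sum.inr r) ∈ JF.game.E := by
  have hm := σp.move_ok _ (mem_T_inl y) h
  obtain ⟨r, hr, _⟩ := E_inl hm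
  exact ⟨r, hr, hr ▸ hm⟩

/-- Shapes of prefixes of plays from `Sum.inl x` when 𝐓 plays the positional `σp`. -/
inductive Alt (JF : JFrame F) (σp : PosStrat JF.game JF.game.T) (x : F) :
    List (GState JF) → Prop
  | base : Alt JF σp x [Sum.inl x]
  | stepR {p : List (GState JF)} {y : F} {r : RuleSym JF} :
      Alt JF σp x p → p.getLast? = some (Sum.inl y) →
      JF.stepT σp (Sum.inl y) (Sum.inr r) → Alt JF σp x (p ++ [Sum.inr r])
  | stepF {p : List (GState JF)} {r : RuleSym JF} {z : F} :
      Alt JF σp x p → p.getLast? = some (Sum.inr r) →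
      JF.stepT σp (Sum.inr r) (Sum.inl z) → Alt JF σp x (p ++ [Sum.inl z])

namespace Alt

variable {σp x}

lemma ne_nil {p : List (GState JF)} (h : Alt JF σp x p) : p ≠ [] := by
  cases h <;> simp

lemma head? {p : List (GState JF)} (h : Alt JF σp x p) : p.head? = some (Sum.inl x) := by
  induction h with
  | base => rfl
  | @stepR p y r hp hl hs ih => rw [List.head?_append_of_ne_nil _ hp.ne_nil]; exact ih
  | @stepF p r z hp hl hs ih => rw [List.head?_append_of_ne_nil _ hp.ne_nil]; exact ih

lemma chainStep {p : List (GState JF)} (h : Alt JF σp x p) :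
    List.Chain' (JF.stepT σp) p := by
  induction h with
  | base => exact List.isChain_singleton _
  | @stepR p y r hp hl hs ih =>
    refine List.isChain_append.2 ⟨ih, List.isChain_singleton _, ?_⟩
    intro a ha b hb
    rw [hl] at ha; cases ha
    cases hb; exact hs
  | @stepF p r z hp hl hs ih =>
    refine List.isChain_append.2 ⟨ih, List.isChain_singleton _, ?_⟩
    intro a ha b hb
    rw [hl] at ha; cases ha
    cases hb; exact hs

lemma chainE {p : List (GState JF)} (h : Alt JF σp x p) :
    List.Chain' (fun a b => (a, b) ∈ JF.game.E) p :=
  h.chainStep.imp (fun _ _ hab => hab.1)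

lemma isPath {p : List (GState JF)} (h : Alt JF σp x p) : JF.game.IsPath p :=
  ⟨h.ne_nil, h.chainE⟩

lemma mem_reach {p : List (GState JF)} (h : Alt JF σp x p) :
    ∀ a ∈ p, a ∈ JF.reachT σp x := by
  induction h with
  | base =>
    intro a ha
    rcases List.mem_singleton.mp ha with rfl
    exact Relation.ReflTransGen.refl
  | @stepR p y r hp hl hs ih =>
    intro a ha
    rcases List.mem_append.mp ha with ha | ha
    · exact ih a ha
    · rcases List.mem_singleton.mp ha with rfl
      have hy := ih _ (by rw [List.getLast?_eq_getElem?] at hl; exact List.mem_of_getElem? hl)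
      exact Relation.ReflTransGen.tail hy hs
  | @stepF p r z hp hl hs ih =>
    intro a ha
    rcases List.mem_append.mp ha with ha | ha
    · exact ih a ha
    · rcases List.mem_singleton.mp ha with rfl
      have hy := ih _ (by rw [List.getLast?_eq_getElem?] at hl; exact List.mem_of_getElem? hl)
      exact Relation.ReflTransGen.tail hy hs

lemma last_shape {p : List (GState JF)} (h : Alt JF σp x p) :
    (Odd p.length ∧ ∃ y, p.getLast? = some (Sum.inl y)) ∨
    (Even p.length ∧ ∃ r, p.getLast? = some (Sum.inr r)) := by
  induction h with
  | base => exact Or.inl ⟨⟨0, rfl⟩, x, rfl⟩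
  | @stepR p y r hp hl hs ih =>
    refine Or.inr ⟨?_, r, List.getLast?_concat (l := p)⟩
    rcases ih with ⟨ho, _⟩ | ⟨_, r', hr'⟩
    · simpa [Nat.even_add_one, Nat.odd_iff, Nat.even_iff] using ho
    · rw [hl] at hr'; simp at hr'
  | @stepF p r z hp hl hs ih =>
    refine Or.inl ⟨?_, z, List.getLast?_concat (l := p)⟩
    rcases ih with ⟨_, y', hy'⟩ | ⟨he, _⟩
    · rw [hl] at hy'; simp at hy'
    · simpa [Nat.odd_add_one, Nat.even_iff, Nat.odd_iff] using he

lemma filt_length {p : List (GState JF)} (h : Alt JF σp x p) :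
    (p.filterMap Sum.getLeft?).length = (p.length + 1) / 2 := by
  induction h with
  | base => simp [Sum.getLeft?]
  | @stepR p y r hp hl hs ih =>
    have ho : Odd p.length := by
      rcases hp.last_shape with ⟨ho, _⟩ | ⟨_, r', hr'⟩
      · exact ho
      · rw [hl] at hr'; simp at hr'
    obtain ⟨m, hm⟩ := ho
    simp only [List.filterMap_append, List.filterMap, Sum.getLeft?, List.append_nil,
      List.length_append, List.length_singleton]
    rw [ih]; omega
  | @stepF p r z hp hl hs ih =>
    have he : Even p.length := by
      rcases hp.last_shape with ⟨_, y', hy'⟩ | ⟨he, _⟩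
      · rw [hl] at hy'; simp at hy'
      · exact he
    obtain ⟨m, hm⟩ := he
    simp only [List.filterMap_append, List.filterMap, Sum.getLeft?, List.append_nil,
      List.length_append, List.length_singleton]
    rw [ih]; omega

lemma filtSpec {p : List (GState JF)} (h : Alt JF σp x p) :
    (p.filterMap Sum.getLeft?).head? = some x ∧
    List.Chain' (fun a b => (a, b) ∈ JF.filtEdgesT σp x) (p.filterMap Sum.getLeft?) ∧
    (∀ e : F, p.getLast? = some (Sum.inl e) →
      (p.filterMap Sum.getLeft?).getLast? = some e) ∧
    (∀ r : RuleSym JF, p.getLast? = some (Sum.inr r) →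
      ∃ y, (p.filterMap Sum.getLeft?).getLast? = some y ∧
        Sum.inl y ∈ JF.reachT σp x ∧ JF.stepT σp (Sum.inl y) (Sum.inr r)) := by
  induction h with
  | base =>
    refine ⟨rfl, List.isChain_singleton _, ?_, ?_⟩
    · intro e he
      simp only [List.getLast?_singleton, Option.some.injEq, Sum.inl.injEq] at he
      subst he
      simp [Sum.getLeft?]
    · intro r hr; simp at hr
  | @stepR p y r hp hl hs ih =>
    obtain ⟨ih1, ih2, ih3, _⟩ := ih
    have hfm : (p ++ [Sum.inr r]).filterMap (Sum.getLeft? (β := RuleSym JF)) =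
        p.filterMap Sum.getLeft? := by
      simp [List.filterMap_append, Sum.getLeft?]
    rw [hfm]
    refine ⟨ih1, ih2, ?_, ?_⟩
    · intro e he
      rw [List.getLast?_concat] at he; simp at he
    · intro r' hr'
      rw [List.getLast?_concat] at hr'
      simp only [Option.some.injEq, Sum.inr.injEq] at hr'
      cases hr'
      exact ⟨y, ih3 y hl,
        hp.mem_reach _ (by rw [List.getLast?_eq_getElem?] at hl; exact List.mem_of_getElem? hl),
        hs⟩
  | @stepF p r z hp hl hs ih =>
    obtain ⟨ih1, ih2, _, ih4⟩ := ih
    obtain ⟨y, hy, hyr, hstep1⟩ := ih4 r hl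
    have hfm : (p ++ [Sum.inl z]).filterMap (Sum.getLeft? (β := RuleSym JF)) =
        p.filterMap Sum.getLeft? ++ [z] := by
      simp [List.filterMap_append, Sum.getLeft?]
    rw [hfm]
    refine ⟨?_, ?_, ?_, ?_⟩
    · rw [List.head?_append_of_ne_nil _ (by rintro hnil; rw [hnil] at hy; simp at hy)]
      exact ih1
    · refine List.isChain_append.2 ⟨ih2, List.isChain_singleton _, ?_⟩
      intro a ha b hb
      rw [hy] at ha; cases ha; cases hb
      exact ⟨r, hyr, hstep1, hs⟩
    · intro e he
      rw [List.getLast?_concat] at he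
      simp only [Option.some.injEq, Sum.inl.injEq] at he
      cases he
      exact List.getLast?_concat
    · intro r' hr'
      rw [List.getLast?_concat] at hr'; simp at hr'

end Alt

/-- Every play prefix against the positional strategy `σp.toGen` has the `Alt` shape. -/
lemma alt_play (τ : GenStrat JF.game JF.game.Tᶜ) (n : ℕ) :
    Alt JF σp x (JF.game.playPrefix σp.toGen τ (Sum.inl x) n) := by
  induction n with
  | zero => exact Alt.base
  | succ n ih =>
    rw [pp_succ]
    rcases hl : (JF.game.playPrefix σp.toGen τ (Sum.inl x) n).getLast? with _ | s
    · rw [stepP_eq_none _ _ hl]; exact ih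
    · rw [stepP_eq_some _ _ hl]
      by_cases he : ∃ t2, (s, t2) ∈ JF.game.E
      · rw [if_pos he]
        rcases s with y | r
        · rw [if_pos (mem_T_inl y)]
          obtain ⟨r, hmv, hE⟩ := move_inl σp he
          have hnext : σp.toGen.next (JF.game.playPrefix σp.toGen τ (Sum.inl x) n) =
              Sum.inr r := by
            show σp.move _ = _
            rw [List.getLastD_eq_getLast?, hl]
            exact hmv
          rw [hnext]
          exact ih.stepR hl ⟨hE, fun _ => hmv.symm⟩
        · rw [if_neg (not_mem_T_inr r)]
          have hE := τ.next_ok _ _ ih.isPath hl (not_mem_T_inr r) he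
          obtain ⟨z, hz, hzb⟩ := E_inr hE
          rw [hz] at hE ⊢
          exact ih.stepF hl ⟨hE, fun hT => absurd hT (not_mem_T_inr r)⟩
      · rw [if_neg he]; exact ih

lemma reach_defined_succ {J : GraphJust JF}
    (hn : J.nodes = JF.filtNodesT σp x) (he : J.edges = JF.filtEdgesT σp x)
    {y : F} (hy : Sum.inl y ∈ JF.reachT σp x) (hyd : y ∈ JF.defined) :
    ∃ z, (y, z) ∈ J.edges := by
  obtain ⟨r, hmv, hE⟩ := move_inl σp (inl_has_succ hyd)
  obtain ⟨z, hz⟩ := JF.rules_body_ne r.1 r.2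
  refine ⟨z, he ▸ ⟨r, hy, ⟨hE, fun _ => hmv.symm⟩, ⟨E_of_body r hz, ?_⟩⟩⟩
  intro hT; exact absurd hT (not_mem_T_inr r)

/-- Play prefixes against `σp.toGen` correspond to `J`-branches (direction ≤). -/
lemma playBranch_isBranch {J : GraphJust JF}
    (hn : J.nodes = JF.filtNodesT σp x) (he : J.edges = JF.filtEdgesT σp x)
    (τ : GenStrat JF.game JF.game.Tᶜ) :
    J.IsBranchFrom x (JF.playBranch σp.toGen τ (Sum.inl x)) := by
  rw [JFrame.playBranch]
  by_cases h : ∃ n, JF.game.playPrefix σp.toGen τ (Sum.inl x) (n + 1) =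
      JF.game.playPrefix σp.toGen τ (Sum.inl x) n
  · rw [dif_pos h]
    set n0 := Nat.find h with hn0
    set p := JF.game.playPrefix σp.toGen τ (Sum.inl x) n0 with hp
    have halt : Alt JF σp x p := alt_play σp x τ n0
    have hst : JF.game.playPrefix σp.toGen τ (Sum.inl x) (n0 + 1) = p := Nat.find_spec h
    rcases hl : p.getLast? with _ | s
    · exact absurd (List.getLast?_eq_none_iff.mp hl) halt.ne_nil
    have hno : ¬∃ t2, (s, t2) ∈ JF.game.E := pp_stab_no_succ _ _ _ hst hl
    obtain ⟨e, rfl⟩ : ∃ e, s = Sum.inl e := by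
      rcases halt.last_shape with ⟨_, y, hy⟩ | ⟨_, r, hr⟩
      · rw [hl] at hy; exact ⟨y, Option.some.inj hy⟩
      · rw [hl] at hr; cases Option.some.inj hr; exact absurd (inr_has_succ r) hno
    obtain ⟨h1, h2, h3, _⟩ := halt.filtSpec
    have hle := h3 e hl
    refine ⟨h1, ?_, ?_, ?_⟩
    · intro a ha
      obtain ⟨b, hbp, hfb⟩ := List.mem_filterMap.mp ha
      obtain rfl : b = Sum.inl a := by
        rcases b with y | r
        · cases Option.some.inj hfb; rfl
        · exact absurd hfb (by simp [Sum.getLeft?])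
      rw [hn]
      exact halt.mem_reach _ hbp
    · rw [he]; exact h2
    · intro e' hle' y hy
      rw [hle] at hle'; cases Option.some.inj hle'
      rw [he] at hy
      obtain ⟨r, _, hstep1, _⟩ := hy
      exact hno ⟨_, hstep1.1⟩
  · rw [dif_neg h]
    have hext : ∀ n, ∃ a, JF.game.playPrefix σp.toGen τ (Sum.inl x) (n + 1) =
        JF.game.playPrefix σp.toGen τ (Sum.inl x) n ++ [a] :=
      fun n => (pp_cases σp.toGen τ (Sum.inl x) n).resolve_left (fun heq => h ⟨n, heq⟩)
    have hlen : ∀ n, (JF.game.playPrefix σp.toGen τ (Sum.inl x) n).length = n + 1 := by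
      intro n
      induction n with
      | zero => rfl
      | succ n ih => obtain ⟨a, ha⟩ := hext n; rw [ha]; simp [ih]
    set PP := JF.game.playPrefix σp.toGen τ (Sum.inl x) with hPP
    have hAlt : ∀ n, Alt JF σp x (PP n) := alt_play σp x τ
    set L : ℕ → List F := fun k => (PP (2 * k + 2)).filterMap Sum.getLeft? with hL
    have hlenl : ∀ k, (L k).length = k + 2 := by
      intro k
      rw [hL]
      simp only []
      rw [(hAlt (2 * k + 2)).filt_length, hlen]
      omega
    have hLstep : ∀ k, ∃ z, L (k + 1) = L k ++ [z] := by
      intro k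
      obtain ⟨a, ha⟩ := hext (2 * k + 2)
      obtain ⟨b, hb⟩ := hext (2 * k + 3)
      obtain ⟨r, hr⟩ : ∃ r : RuleSym JF, a = Sum.inr r := by
        rcases (hAlt (2 * k + 3)).last_shape with ⟨ho, _⟩ | ⟨_, r, hrr⟩
        · rw [hlen] at ho; exact absurd ho (by simp [Nat.odd_iff]; omega)
        · rw [ha, List.getLast?_concat] at hrr
          exact ⟨r, Option.some.inj hrr⟩
      obtain ⟨z, hz⟩ : ∃ z : F, b = Sum.inl z := by
        rcases (hAlt (2 * k + 4)).last_shape with ⟨_, z, hzz⟩ | ⟨hev, _⟩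
        · rw [show 2 * k + 4 = (2 * k + 3) + 1 from rfl, hb, List.getLast?_concat] at hzz
          exact ⟨z, Option.some.inj hzz⟩
        · rw [hlen] at hev; exact absurd hev (by simp [Nat.even_iff]; omega)
      refine ⟨z, ?_⟩
      rw [hL]
      simp only []
      rw [show 2 * (k + 1) + 2 = (2 * k + 3) + 1 from rfl, hb, ha, hr, hz]
      simp [List.filterMap_append, Sum.getLeft?]; rfl
    have hgl : ∀ k, k < (L k).length := by intro k; rw [hlenl]; omega
    have hgd : ∀ k, (L k).getD k JF.tLit = (L k)[k]'(hgl k) :=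
      fun k => List.getD_eq_getElem _ _ (hgl k)
    have hcompat : ∀ k, (L (k + 1)).getD k JF.tLit = (L k).getD k JF.tLit := by
      intro k
      obtain ⟨z, hz⟩ := hLstep k
      rw [hz]
      exact List.getD_append _ _ _ _ (hgl k)
    refine ⟨?_, ?_, ?_⟩
    · show (L 0).getD 0 JF.tLit = x
      rw [hgd 0]
      have hh : (L 0).head? = some x := ((hAlt 2).filtSpec).1
      rw [List.head?_eq_getElem?] at hh
      rw [List.getElem?_eq_getElem (hgl 0)] at hh
      exact Option.some.inj hh
    · intro n
      show (L n).getD n JF.tLit ∈ J.nodes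
      rw [hgd n, hn]
      have : (L n)[n]'(hgl n) ∈ L n := List.getElem_mem _
      obtain ⟨b, hbp, hfb⟩ := List.mem_filterMap.mp this
      obtain rfl : b = Sum.inl ((L n)[n]'(hgl n)) := by
        rcases b with y | r
        · cases Option.some.inj hfb; rfl
        · exact absurd hfb (by simp [Sum.getLeft?])
      exact (hAlt (2 * n + 2)).mem_reach _ hbp
    · intro n
      show ((L n).getD n JF.tLit, (L (n + 1)).getD (n + 1) JF.tLit) ∈ J.edges
      rw [← hcompat n, hgd (n + 1), List.getD_eq_getElem _ _ (by rw [hlenl]; omega : n < (L (n+1)).length)]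
      have hch : List.Chain' (fun a b => (a, b) ∈ JF.filtEdgesT σp x) (L (n + 1)) :=
        ((hAlt (2 * (n + 1) + 2)).filtSpec).2.1
      unfold List.Chain' at hch
      rw [List.isChain_iff_getElem] at hch
      have := hch n (by rw [hlenl]; omega)
      rw [he]
      convert this using 2 <;> simp [List.get_eq_getElem]


/-- The strategy for 𝐅 that follows a prescribed sequence of facts. -/
noncomputable def tauB (JF : JFrame F) (g : ℕ → Option F) :
    GenStrat JF.game JF.game.Tᶜ where
  next p :=
    if h : ∃ r : RuleSym JF, p.getLast? = some (Sum.inr r) then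
      (if hz : ∃ z, z ∈ h.choose.1.2 ∧ g (p.length / 2) = some z then Sum.inl hz.choose
       else Sum.inl (JF.rules_body_ne h.choose.1 h.choose.2).some)
    else Sum.inl JF.tLit
  next_ok := by
    intro p s hp hlast hsT hout
    rcases s with y | r
    · exact absurd (mem_T_inl y) hsT
    · have h : ∃ r' : RuleSym JF, p.getLast? = some (Sum.inr r') := ⟨r, hlast⟩
      have hc : h.choose = r :=
        Sum.inr.inj (Option.some.inj (h.choose_spec.symm.trans hlast))
      show (Sum.inr r,
        if h : ∃ r : RuleSym JF, p.getLast? = some (Sum.inr r) then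
          (if hz : ∃ z, z ∈ h.choose.1.2 ∧ g (p.length / 2) = some z then Sum.inl hz.choose
           else Sum.inl (JF.rules_body_ne h.choose.1 h.choose.2).some)
        else Sum.inl JF.tLit) ∈ JF.game.E
      rw [dif_pos h]
      by_cases hz : ∃ z, z ∈ h.choose.1.2 ∧ g (p.length / 2) = some z
      · rw [dif_pos hz]
        exact E_of_body r (hc ▸ hz.choose_spec.1)
      · rw [dif_neg hz]
        exact E_of_body r (hc ▸ (JF.rules_body_ne h.choose.1 h.choose.2).some_mem)

/-- Core simulation: the play against `tauB JF g` follows `g`. -/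
lemma tauB_run (g : ℕ → Option F) (hg0 : g 0 = some x)
    (hdc : ∀ k, (g (k + 1)).isSome → (g k).isSome)
    (hstep : ∀ k y z, g k = some y → g (k + 1) = some z → (y, z) ∈ JF.filtEdgesT σp x) :
    ∀ k y, g k = some y →
      (JF.game.playPrefix σp.toGen (tauB JF g) (Sum.inl x) (2 * k)).getLast? =
        some (Sum.inl y) ∧
      (JF.game.playPrefix σp.toGen (tauB JF g) (Sum.inl x) (2 * k)).length = 2 * k + 1 ∧
      (JF.game.playPrefix σp.toGen (tauB JF g) (Sum.inl x) (2 * k)).filterMap Sum.getLeft? =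
        (List.range (k + 1)).filterMap g := by
  intro k
  induction k with
  | zero =>
    intro y hy
    rw [hg0] at hy; cases Option.some.inj hy
    refine ⟨rfl, rfl, ?_⟩
    show [x] = _
    simp [List.range_succ, hg0]
  | succ k ih =>
    intro z hz
    obtain ⟨y, hy⟩ : ∃ y, g k = some y :=
      Option.isSome_iff_exists.mp (hdc k (by rw [hz]; rfl))
    obtain ⟨ihl, ihn, ihf⟩ := ih y hy
    obtain ⟨r, hyreach, hstep1, hstep2⟩ := hstep k y z hy hz
    have hmv : σp.move (Sum.inl y) = Sum.inr r := (hstep1.2 (mem_T_inl y)).symm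
    have hzmem : z ∈ r.1.2 := by
      obtain ⟨z', hz', hzb⟩ := E_inr hstep2.1
      cases Sum.inl.inj hz'; exact hzb
    have h1 : JF.game.playPrefix σp.toGen (tauB JF g) (Sum.inl x) (2 * k + 1) =
        JF.game.playPrefix σp.toGen (tauB JF g) (Sum.inl x) (2 * k) ++ [Sum.inr r] := by
      rw [pp_succ, stepP_eq_some _ _ ihl, if_pos ⟨Sum.inr r, hstep1.1⟩,
        if_pos (mem_T_inl y)]
      congr 1
      show [σp.move _] = _
      rw [List.getLastD_eq_getLast?, ihl]
      simp [hmv]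
    have hl1 : (JF.game.playPrefix σp.toGen (tauB JF g) (Sum.inl x) (2 * k + 1)).getLast?
        = some (Sum.inr r) := by
      rw [h1]; exact List.getLast?_concat
    have hn1 : (JF.game.playPrefix σp.toGen (tauB JF g) (Sum.inl x) (2 * k + 1)).length
        = 2 * k + 2 := by rw [h1]; simp [ihn]
    have hnext : (tauB JF g).next
        (JF.game.playPrefix σp.toGen (tauB JF g) (Sum.inl x) (2 * k + 1)) = Sum.inl z := by
      set p := JF.game.playPrefix σp.toGen (tauB JF g) (Sum.inl x) (2 * k + 1) with hp
      show (if h : ∃ r' : RuleSym JF, p.getLast? = some (Sum.inr r') then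
          (if hz : ∃ z', z' ∈ h.choose.1.2 ∧ g (p.length / 2) = some z'
            then Sum.inl hz.choose
            else Sum.inl (JF.rules_body_ne h.choose.1 h.choose.2).some)
        else Sum.inl JF.tLit) = Sum.inl z
      have hex : ∃ r' : RuleSym JF, p.getLast? = some (Sum.inr r') := ⟨r, hl1⟩
      rw [dif_pos hex]
      have hc : hex.choose = r :=
        Sum.inr.inj (Option.some.inj (hex.choose_spec.symm.trans hl1))
      have hdiv : p.length / 2 = k + 1 := by rw [hn1]; omega
      have hz' : g (p.length / 2) = some z := by rw [hdiv]; exact hz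
      have hzz : ∃ z', z' ∈ hex.choose.1.2 ∧ g (p.length / 2) = some z' :=
        ⟨z, by rw [hc]; exact hzmem, hz'⟩
      rw [dif_pos hzz]
      exact congrArg Sum.inl (Option.some.inj (hzz.choose_spec.2.symm.trans hz'))
    have h2 : JF.game.playPrefix σp.toGen (tauB JF g) (Sum.inl x) (2 * (k + 1)) =
        JF.game.playPrefix σp.toGen (tauB JF g) (Sum.inl x) (2 * k + 1) ++ [Sum.inl z] := by
      rw [show 2 * (k + 1) = (2 * k + 1) + 1 from by omega, pp_succ,
        stepP_eq_some _ _ hl1, if_pos ⟨Sum.inl z, hstep2.1⟩,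
        if_neg (not_mem_T_inr r), hnext]
    refine ⟨?_, ?_, ?_⟩
    · rw [h2]; exact List.getLast?_concat
    · rw [h2]; simp [hn1]; omega
    · rw [h2, h1]
      simp only [List.filterMap_append]
      rw [ihf]
      rw [List.range_succ (n := k + 1), List.filterMap_append]
      simp [Sum.getLeft?, hz]

lemma range_filterMap_getElem? (l : List F) :
    ∀ n, n ≤ l.length → (List.range n).filterMap (fun k => l[k]?) = l.take n := by
  intro n
  induction n with
  | zero => intro _; simp
  | succ n ih =>
    intro hn
    rw [List.range_succ, List.filterMap_append, ih (by omega), List.take_succ]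
    simp [List.getElem?_eq_getElem (by omega : n < l.length)]

lemma tauB_fin {J : GraphJust JF}
    (hn : J.nodes = JF.filtNodesT σp x) (he : J.edges = JF.filtEdgesT σp x)
    (l : List F) (hb : J.IsBranchFrom x (.fin l)) :
    JF.playBranch σp.toGen (tauB JF (fun k => l[k]?)) (Sum.inl x) = .fin l := by
  obtain ⟨hh, hm, hc, hmax⟩ := hb
  have hL : 0 < l.length := by
    cases l with
    | nil => simp at hh
    | cons a l => simp
  have hg0 : (fun k => l[k]?) 0 = some x := by
    show l[0]? = some x
    rw [← List.head?_eq_getElem?]; exact hh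
  have hdc : ∀ k, ((fun k => l[k]?) (k + 1)).isSome → ((fun k => l[k]?) k).isSome := by
    intro k hk
    rw [Option.isSome_iff_exists] at hk ⊢
    obtain ⟨z, hz⟩ := hk
    obtain ⟨h1, -⟩ := List.getElem?_eq_some_iff.mp hz
    exact ⟨_, List.getElem?_eq_some_iff.mpr ⟨by omega, rfl⟩⟩
  have hstep : ∀ k y z, (fun k => l[k]?) k = some y → (fun k => l[k]?) (k + 1) = some z →
      (y, z) ∈ JF.filtEdgesT σp x := by
    intro k y z hky hkz
    simp only [] at hky hkz
    have hk1 : k + 1 < l.length := by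
      by_contra hcon
      rw [List.getElem?_eq_none (by omega)] at hkz
      cases hkz
    rw [List.getElem?_eq_getElem (by omega)] at hky
    rw [List.getElem?_eq_getElem hk1] at hkz
    unfold List.Chain' at hc
    rw [List.isChain_iff_getElem] at hc
    have := hc k (by omega)
    rw [← he]
    rw [Option.some.inj hky, Option.some.inj hkz] at this
    exact this
  have hlaste : (fun k => l[k]?) (l.length - 1) =
      some (l[l.length - 1]'(by omega)) := by
    simp only []
    exact List.getElem?_eq_getElem (by omega)
  obtain ⟨hpl, hpn, hpf⟩ := tauB_run σp x _ hg0 hdc hstep (l.length - 1) _ hlaste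
  have hel : l.getLast? = some (l[l.length - 1]'(by omega)) := by
    rw [List.getLast?_eq_getElem?]
    exact List.getElem?_eq_getElem (by omega)
  have hend : l[l.length - 1]'(by omega) ∉ JF.defined := by
    intro hd
    have hnode : l[l.length - 1]'(by omega) ∈ J.nodes :=
      hm _ (List.getElem_mem _)
    rw [hn] at hnode
    obtain ⟨z, hz⟩ := reach_defined_succ σp x hn he hnode hd
    exact hmax _ hel z hz
  have hno : ¬∃ t, ((Sum.inl (l[l.length - 1]'(by omega)) : GState JF), t) ∈ JF.game.E :=
    fun ⟨t, ht⟩ => hend (defined_of_inl_succ ht)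
  have hstab : JF.game.playPrefix σp.toGen (tauB JF (fun k => l[k]?)) (Sum.inl x)
        (2 * (l.length - 1) + 1) =
      JF.game.playPrefix σp.toGen (tauB JF (fun k => l[k]?)) (Sum.inl x)
        (2 * (l.length - 1)) := by
    rw [pp_succ, stepP_eq_some _ _ hpl, if_neg hno]
  have hex : ∃ n, JF.game.playPrefix σp.toGen (tauB JF (fun k => l[k]?)) (Sum.inl x)
        (n + 1) =
      JF.game.playPrefix σp.toGen (tauB JF (fun k => l[k]?)) (Sum.inl x) n :=
    ⟨2 * (l.length - 1), hstab⟩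
  rw [JFrame.playBranch, dif_pos hex]
  have hfind := pp_const_after _ _ _ (Nat.find_spec hex) (2 * (l.length - 1))
    (Nat.find_min' hex hstab)
  rw [← hfind, hpf]
  rw [show l.length - 1 + 1 = l.length from by omega]
  rw [range_filterMap_getElem? l l.length le_rfl]
  simp

lemma tauB_inf {J : GraphJust JF}
    (hn : J.nodes = JF.filtNodesT σp x) (he : J.edges = JF.filtEdgesT σp x)
    (s : ℕ → F) (hb : J.IsBranchFrom x (.inf s)) :
    JF.playBranch σp.toGen (tauB JF (fun k => some (s k))) (Sum.inl x) = .inf s := by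
  obtain ⟨h0, hmem, hedge⟩ := hb
  have hg0 : (fun k => some (s k)) 0 = some x := by show some (s 0) = some x; rw [h0]
  have hdc : ∀ k, ((fun k => some (s k)) (k + 1)).isSome →
      ((fun k => some (s k)) k).isSome := fun _ _ => rfl
  have hstep : ∀ k y z, (fun k => some (s k)) k = some y →
      (fun k => some (s k)) (k + 1) = some z → (y, z) ∈ JF.filtEdgesT σp x := by
    intro k y z hky hkz
    cases Option.some.inj hky; cases Option.some.inj hkz
    rw [← he]
    exact hedge k
  have run := tauB_run σp x _ hg0 hdc hstep
  have hnostab : ¬∃ n, JF.game.playPrefix σp.toGen (tauB JF (fun k => some (s k)))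
        (Sum.inl x) (n + 1) =
      JF.game.playPrefix σp.toGen (tauB JF (fun k => some (s k))) (Sum.inl x) n := by
    rintro ⟨n, hstab⟩
    have hconst := pp_const_after _ _ _ hstab (2 * (n + 1)) (by omega)
    have hlen := (run (n + 1) (s (n + 1)) rfl).2.1
    rw [hconst] at hlen
    have := pp_len_le σp.toGen (tauB JF (fun k => some (s k))) (Sum.inl x) n
    omega
  rw [JFrame.playBranch, dif_neg hnostab]
  congr 1
  funext k
  have hf := (run (k + 1) (s (k + 1)) rfl).2.2
  rw [show 2 * (k + 1) = 2 * k + 2 from by omega] at hf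
  rw [hf]
  have : (List.range (k + 1 + 1)).filterMap (fun k => some (s k)) =
      (List.range (k + 2)).map s := by
    induction (List.range (k + 2)) with
    | nil => rfl
    | cons a t iht => simp [List.filterMap_cons, iht]
  rw [this, List.getD_eq_getElem _ _ (by simp : k < ((List.range (k + 2)).map s).length)]
  simp

end AuxJF

theorem stmt5 {F : Type} (JF : JFrame F) (B : Branch F → F) (I : Interp JF)
    (σ : PosStrat JF.game JF.game.T) (x : F) (hx : x ∈ JF.defined)
    (J : GraphJust JF) (hn : J.nodes = JF.filtNodesT σ x)
    (he : J.edges = JF.filtEdgesT σ x) :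
    J.val B x I = ⨅ τ : GenStrat JF.game JF.game.Tᶜ, JF.uS B I (Sum.inl x) σ.toGen τ := by
  apply le_antisymm
  · refine le_iInf fun τ => ?_
    exact iInf₂_le _ (playBranch_isBranch σ x hn he τ)
  · refine le_iInf fun b => le_iInf fun hb => ?_
    cases b with
    | fin l =>
      refine (iInf_le _ (tauB JF (fun k => l[k]?))).trans ?_
      exact le_of_eq (congrArg (fun b => I.val (B b)) (tauB_fin σ x hn he l hb))
    | inf s =>
      refine (iInf_le _ (tauB JF (fun k => some (s k)))).trans ?_
      exact le_of_eq (congrArg (fun b => I.val (B b)) (tauB_inf σ x hn he s hb))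

end JT
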